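/- Let C ⊆ E be nonempty and convex, let P : E → E satisfy P z ∈ C and ⟨z − P z, c − P z⟩ ≤ 0 for all z ∈ E and c ∈ C (metric projection onto C). Let F : E → E be L-Lipschitz, suppose S := F + N_C is ρ-comonotone, and let z⋆ ∈ C with −F z⋆ ∈ N_C(z⋆). Let γ satisfy max{0, −2ρ} < γ ≤ 1/L, set H := id − γF, and let α ∈ (0, 1) with α < 1 + 2ρ/γ. Consider the CEG+ iteration: z̄^k = P(H z^k), z^{k+1} = z^k − α(H z^k − H z̄^k). Then for every K ≥ 1: (1/K) Σ_{k=0}^{K−1} ‖H z^k − H z̄^k‖² ≤ ‖z^0 − z⋆‖² / (α(1 + 2ρ/γ − α)K). Since (H z^k − H z̄^k)/γ ∈ S(z̄^k), this yields (1/K) Σ_{k=0}^{K−1} dist(0, S z̄^k)² ≤ ‖z^0 − z⋆‖² / (αγ²(1 + 2ρ/γ − α)K). -/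

import Mathlib

open InnerProductSpace

/-- average rate of the constrained CEG+ iteration on the
operator residual: with `max{0, −2ρ} < γ ≤ 1/L`, `α ∈ (0,1)`,
`α < 1 + 2ρ/γ`, for every `K ≥ 1`:
`(1/K) Σ_{k<K} ‖H z^k − H z̄^k‖² ≤ ‖z^0 − z⋆‖²/(α(1 + 2ρ/γ − α)K)` and
`(1/K) Σ_{k<K} dist(0, S z̄^k)² ≤ ‖z^0 − z⋆‖²/(αγ²(1 + 2ρ/γ − α)K)`. -/
theorem stmt16 {E : Type*} [NormedAddCommGroup E] [InnerProductSpace ℝ E]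
    (C : Set E) (hCne : C.Nonempty) (hCconv : Convex ℝ C)
    (P : E → E) (hPmem : ∀ z, P z ∈ C)
    (hPproj : ∀ z : E, ∀ c ∈ C, ⟪z - P z, c - P z⟫_ℝ ≤ 0)
    (F : E → E) (L ρ γ α : ℝ) (hL : 0 < L)
    (hF : ∀ z z' : E, ‖F z - F z'‖ ≤ L * ‖z - z'‖)
    (S : E → Set E)
    (hSdef : ∀ zz : E, S zz =
      {v | zz ∈ C ∧ ∃ u, (∀ c ∈ C, ⟪u, c - zz⟫_ℝ ≤ 0) ∧ v = F zz + u})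
    (hS : ∀ z z' v v' : E, v ∈ S z → v' ∈ S z' →
      ⟪v - v', z - z'⟫_ℝ ≥ ρ * ‖v - v'‖^2)
    (zstar : E) (hzC : zstar ∈ C)
    (hzstar : ∀ c ∈ C, ⟪-F zstar, c - zstar⟫_ℝ ≤ 0)
    (hγ : max 0 (-(2 * ρ)) < γ) (hγL : γ ≤ 1 / L)
    (hα0 : 0 < α) (hα1 : α < 1) (hαρ : α < 1 + 2 * ρ / γ)
    (H : E → E) (hH : ∀ zz, H zz = zz - γ • F zz)
    (z zbar : ℕ → E)
    (hzbar : ∀ k, zbar k = P (H (z k)))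
    (hz : ∀ k, z (k + 1) = z k - α • (H (z k) - H (zbar k))) :
    ∀ K : ℕ, 1 ≤ K →
      ((1 / (K : ℝ)) * ∑ k ∈ Finset.range K, ‖H (z k) - H (zbar k)‖^2 ≤
          ‖z 0 - zstar‖^2 / (α * (1 + 2 * ρ / γ - α) * K)) ∧
      ((1 / (K : ℝ)) * ∑ k ∈ Finset.range K,
            (Metric.infDist (0 : E) (S (zbar k)))^2 ≤
          ‖z 0 - zstar‖^2 / (α * γ^2 * (1 + 2 * ρ / γ - α) * K)) := by

  -- basic facts
  have hγ0 : 0 < γ := lt_of_le_of_lt (le_max_left _ _) hγ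
  have hγρ : -(2 * ρ) < γ := lt_of_le_of_lt (le_max_right _ _) hγ
  have hγL1 : γ * L ≤ 1 := by
    rw [le_div_iff₀ hL] at hγL; exact hγL
  set B : ℝ := α * (1 + 2 * ρ / γ - α) with hBdef
  have hB : 0 < B := mul_pos hα0 (by linarith)
  -- membership of the residual in S (zbar k)
  have hv : ∀ k, γ⁻¹ • (H (z k) - H (zbar k)) ∈ S (zbar k) := by
    intro k
    rw [hSdef, hzbar]
    refine ⟨hPmem _, γ⁻¹ • (H (z k) - P (H (z k))), ?_, ?_⟩
    · intro c hc
      rw [real_inner_smul_left]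
      exact mul_nonpos_of_nonneg_of_nonpos (by positivity) (hPproj _ c hc)
    · rw [hH (P (H (z k)))]
      have hγinv : γ⁻¹ * γ = 1 := inv_mul_cancel₀ hγ0.ne'
      match_scalars <;> field_simp
  have h0S : (0 : E) ∈ S zstar := by
    rw [hSdef]
    exact ⟨hzC, -F zstar, hzstar, by simp⟩
  -- one-step decrease
  have hkey : ∀ k, ‖z (k + 1) - zstar‖ ^ 2 ≤
      ‖z k - zstar‖ ^ 2 - B * ‖H (z k) - H (zbar k)‖ ^ 2 := by
    intro k
    set w : E := z k
    set wb : E := zbar k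
    set r : E := H w - H wb with hrdef
    -- comonotonicity
    have hco := hS wb zstar (γ⁻¹ • r) 0 (hv k) h0S
    rw [sub_zero] at hco
    have hinner1 : ⟪r, wb - zstar⟫_ℝ ≥ (ρ / γ) * ‖r‖ ^ 2 := by
      rw [real_inner_smul_left, norm_smul, Real.norm_eq_abs,
        abs_of_pos (inv_pos.mpr hγ0), mul_pow] at hco
      have h2 : γ * (γ⁻¹ * ⟪r, wb - zstar⟫_ℝ) ≥ γ * (ρ * ((γ⁻¹) ^ 2 * ‖r‖ ^ 2)) :=
        mul_le_mul_of_nonneg_left hco hγ0.le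
      have h3 : γ * γ⁻¹ = 1 := mul_inv_cancel₀ hγ0.ne'
      calc (ρ / γ) * ‖r‖ ^ 2 = γ⁻¹ * (γ * (ρ * ((γ⁻¹) ^ 2 * ‖r‖ ^ 2))) * γ := by
            field_simp
        _ ≤ γ⁻¹ * (γ * (γ⁻¹ * ⟪r, wb - zstar⟫_ℝ)) * γ := by
            have := mul_le_mul_of_nonneg_left h2 (inv_pos.mpr hγ0).le
            exact mul_le_mul_of_nonneg_right this hγ0.le
        _ = ⟪r, wb - zstar⟫_ℝ := by field_simp
    -- Lipschitz part
    have hinner2 : ⟪r, w - wb⟫_ℝ ≥ (1 / 2) * ‖r‖ ^ 2 := by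
      set a : E := w - wb
      set b : E := γ • (F w - F wb)
      have hrab : r = a - b := by
        rw [hrdef, hH w, hH wb]
        module
      have hb : ‖b‖ ≤ ‖a‖ := by
        rw [norm_smul, Real.norm_eq_abs, abs_of_pos hγ0]
        calc γ * ‖F w - F wb‖ ≤ γ * (L * ‖w - wb‖) :=
              mul_le_mul_of_nonneg_left (hF w wb) hγ0.le
          _ = (γ * L) * ‖a‖ := by ring
          _ ≤ 1 * ‖a‖ := mul_le_mul_of_nonneg_right hγL1 (norm_nonneg _)
          _ = ‖a‖ := one_mul _
      have hb2 : ‖b‖ ^ 2 ≤ ‖a‖ ^ 2 := by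
        exact pow_le_pow_left₀ (norm_nonneg _) hb 2
      have hexp : ‖r‖ ^ 2 = ‖a‖ ^ 2 - 2 * ⟪a, b⟫_ℝ + ‖b‖ ^ 2 := by
        rw [hrab, @norm_sub_sq_real]
        try ring
      have hra : ⟪r, a⟫_ℝ = ‖a‖ ^ 2 - ⟪a, b⟫_ℝ := by
        rw [hrab, inner_sub_left, real_inner_self_eq_norm_sq, real_inner_comm]
      rw [hra]
      linarith [hexp, hb2]
    -- expand the update
    have hupd : ‖z (k + 1) - zstar‖ ^ 2 =
        ‖w - zstar‖ ^ 2 - 2 * α * ⟪w - zstar, r⟫_ℝ + α ^ 2 * ‖r‖ ^ 2 := by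
      rw [hz k]
      have : z k - α • (H (z k) - H (zbar k)) - zstar = (w - zstar) - α • r := by
        rw [hrdef]; module
      rw [this, @norm_sub_sq_real, real_inner_smul_right, norm_smul,
        Real.norm_eq_abs, abs_of_pos hα0, mul_pow]
      ring
    have hsplit : ⟪w - zstar, r⟫_ℝ = ⟪r, w - wb⟫_ℝ + ⟪r, wb - zstar⟫_ℝ := by
      rw [← inner_add_right]
      have : (w - wb) + (wb - zstar) = w - zstar := by abel
      rw [this, real_inner_comm]
    rw [hupd, hsplit, hBdef]
    have h1' : α * ((ρ / γ) * ‖r‖ ^ 2) ≤ α * ⟪r, wb - zstar⟫_ℝ :=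
      mul_le_mul_of_nonneg_left hinner1 hα0.le
    have h2' : α * ((1 / 2) * ‖r‖ ^ 2) ≤ α * ⟪r, w - wb⟫_ℝ :=
      mul_le_mul_of_nonneg_left hinner2 hα0.le
    have e : α * (1 + 2 * ρ / γ - α) * ‖r‖ ^ 2 =
        2 * (α * (ρ / γ * ‖r‖ ^ 2)) + 2 * (α * (1 / 2 * ‖r‖ ^ 2)) - α * α * ‖r‖ ^ 2 := by
      ring
    rw [e]; nlinarith [h1', h2']
  -- telescoping sum
  have hsum : ∀ K : ℕ, ‖z K - zstar‖ ^ 2 +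
      B * ∑ k ∈ Finset.range K, ‖H (z k) - H (zbar k)‖ ^ 2 ≤ ‖z 0 - zstar‖ ^ 2 := by
    intro K
    induction K with
    | zero => simp
    | succ n ih =>
        rw [Finset.sum_range_succ, mul_add]
        have := hkey n
        linarith
  intro K hK
  have hK0 : (0 : ℝ) < K := by exact_mod_cast hK
  set D : ℝ := ‖z 0 - zstar‖ ^ 2 with hDdef
  have hD0 : 0 ≤ D := sq_nonneg _
  have hsum' : B * ∑ k ∈ Finset.range K, ‖H (z k) - H (zbar k)‖ ^ 2 ≤ D := by
    have := hsum K
    nlinarith [sq_nonneg ‖z K - zstar‖]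
  have hpos : (0:ℝ) < 1 + 2 * ρ / γ - α := by linarith
  have hSig : ∑ k ∈ Finset.range K, ‖H (z k) - H (zbar k)‖ ^ 2 ≤ D / B := by
    rw [le_div_iff₀ hB]; linarith [hsum']
  constructor
  · calc (1 / (K : ℝ)) * ∑ k ∈ Finset.range K, ‖H (z k) - H (zbar k)‖ ^ 2
        ≤ (1 / (K : ℝ)) * (D / B) :=
          mul_le_mul_of_nonneg_left hSig (by positivity)
      _ = D / (B * K) := by
          rw [one_div_mul_eq_div, div_div]
  · have hd : ∀ k, Metric.infDist (0 : E) (S (zbar k)) ≤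
        γ⁻¹ * ‖H (z k) - H (zbar k)‖ := by
      intro k
      have := Metric.infDist_le_dist_of_mem (x := (0 : E)) (hv k)
      rwa [dist_zero_left, norm_smul, Real.norm_eq_abs,
        abs_of_pos (inv_pos.mpr hγ0)] at this
    have hd2 : ∀ k, (Metric.infDist (0 : E) (S (zbar k))) ^ 2 ≤
        (γ⁻¹) ^ 2 * ‖H (z k) - H (zbar k)‖ ^ 2 := by
      intro k
      have h := pow_le_pow_left₀ Metric.infDist_nonneg (hd k) 2
      rwa [mul_pow] at h
    have hSd : ∑ k ∈ Finset.range K, (Metric.infDist (0 : E) (S (zbar k))) ^ 2 ≤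
        (γ⁻¹) ^ 2 * (D / B) := by
      calc ∑ k ∈ Finset.range K, (Metric.infDist (0 : E) (S (zbar k))) ^ 2
          ≤ ∑ k ∈ Finset.range K, (γ⁻¹) ^ 2 * ‖H (z k) - H (zbar k)‖ ^ 2 :=
            Finset.sum_le_sum fun k _ => hd2 k
        _ = (γ⁻¹) ^ 2 * ∑ k ∈ Finset.range K, ‖H (z k) - H (zbar k)‖ ^ 2 :=
            (Finset.mul_sum _ _ _).symm
        _ ≤ (γ⁻¹) ^ 2 * (D / B) := mul_le_mul_of_nonneg_left hSig (by positivity)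
    calc (1 / (K : ℝ)) * ∑ k ∈ Finset.range K, (Metric.infDist (0 : E) (S (zbar k))) ^ 2
        ≤ (1 / (K : ℝ)) * ((γ⁻¹) ^ 2 * (D / B)) :=
          mul_le_mul_of_nonneg_left hSd (by positivity)
      _ = D / (α * γ ^ 2 * (1 + 2 * ρ / γ - α) * K) := by
          have hden : α * γ ^ 2 * (1 + 2 * ρ / γ - α) * K = γ ^ 2 * (B * K) := by
            rw [hBdef]; ring
          rw [hden, one_div_mul_eq_div, inv_pow, inv_mul_eq_div, div_div, div_div]
          congr 1
          ring
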